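/- For α ∈ (0,2), let q_α(x) = exp(−|x|^α) and for a positive integer k let q_{α,k} be the k-fold convolution of q_α with itself. Then there exist positive constants a_{α,k} and b_{α,k} such that for all x ∈ ℝ: a_{α,k} exp(−|x|^α) ≤ q_{α,k}(x) ≤ b_{α,k} exp(−|x|^α / 2^{(k−1)α}). -/

import Mathlib

open MeasureTheory Filter

noncomputable section

/-- `q_α(x) = exp(-|x|^α)`. -/
def qa (α : ℝ) (x : ℝ) : ℝ := Real.exp (-|x| ^ α)

/-- `qak α k = q_{α,k+1}`, the `(k+1)`-fold convolution of `q_α` with itself: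
`qak α 0 = q_α` and `qak α (k+1) = (qak α k) ⋆ q_α`. -/
def qak (α : ℝ) : ℕ → ℝ → ℝ
  | 0 => qa α
  | (k + 1) => fun x => ∫ t : ℝ, qak α k (x - t) * qa α t


lemma integrable_exp_neg_abs_rpow {α : ℝ} (hα : 0 < α) :
    Integrable (fun x : ℝ => Real.exp (-|x| ^ α)) := by
  set g : ℝ → ℝ := fun x : ℝ => Real.exp (-|x| ^ α) with hg
  have hIoi : IntegrableOn g (Set.Ioi 0) := by
    have h1 : IntegrableOn (fun x : ℝ => Real.exp (-x ^ α)) (Set.Ioi 0) := by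
      rw [← integrableOn_Ioi_comp_rpow_iff _ (ne_of_gt (by positivity : (0:ℝ) < α⁻¹))]
      have h2 : IntegrableOn (fun x : ℝ => α⁻¹ * (x ^ (α⁻¹ - 1) * Real.exp (-x)))
          (Set.Ioi 0) := by
      -- gives x ^ s * exp (-x ^ 1)
        have h3 := integrableOn_rpow_mul_exp_neg_rpow (s := α⁻¹ - 1)
          (by have := inv_pos.mpr hα; linarith : (-1:ℝ) < α⁻¹ - 1) one_pos
        simp only [Real.rpow_one] at h3
        exact h3.const_mul _
      refine h2.congr_fun (fun x hx => ?_) measurableSet_Ioi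
      have hx0 : (0:ℝ) < x := hx
      rw [smul_eq_mul, ← Real.rpow_mul hx0.le α⁻¹ α, inv_mul_cancel₀ hα.ne', Real.rpow_one,
        abs_of_pos (by positivity : (0:ℝ) < α⁻¹)]
      ring
    exact h1.congr_fun (fun x hx => by simp [hg, abs_of_pos (show (0:ℝ) < x from hx)]) measurableSet_Ioi
  have hIci : IntegrableOn g (Set.Ici 0) := Iff.mpr integrableOn_Ici_iff_integrableOn_Ioi hIoi
  have hIic : IntegrableOn g (Set.Iic 0) := by
    have hind : Integrable ((Set.Ici (0:ℝ)).indicator g) :=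
      (integrable_indicator_iff measurableSet_Ici).mpr hIci
    have hneg : Integrable (fun x : ℝ => (Set.Ici (0:ℝ)).indicator g (-x)) := hind.comp_neg
    have heq : (fun x : ℝ => (Set.Ici (0:ℝ)).indicator g (-x)) =
        (Set.Iic (0:ℝ)).indicator g := by
      funext x
      by_cases hx : x ≤ 0
      · rw [Set.indicator_of_mem (by simpa using hx), Set.indicator_of_mem (by simpa using hx)]
        simp [hg, abs_neg]
      · rw [Set.indicator_of_notMem (by simpa using hx), Set.indicator_of_notMem (by simpa using hx)]
    rw [heq] at hneg
    exact (integrable_indicator_iff measurableSet_Iic).mp hneg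
  have : IntegrableOn g (Set.Iic 0 ∪ Set.Ioi 0) := hIic.union hIoi
  rwa [Set.Iic_union_Ioi, integrableOn_univ] at this

lemma integrable_exp_neg_abs_rpow_div {α M : ℝ} (hα : 0 < α) (hM : 0 < M) :
    Integrable (fun x : ℝ => Real.exp (-(|x| ^ α) / M)) := by
  have hc : (0:ℝ) < M ^ (-α⁻¹) := Real.rpow_pos_of_pos hM _
  have h := (integrable_exp_neg_abs_rpow hα).comp_mul_left' (R := M ^ (-α⁻¹)) hc.ne'
  refine h.congr (Filter.Eventually.of_forall fun x => ?_)
  simp only []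
  rw [abs_mul, abs_of_pos hc, Real.mul_rpow hc.le (abs_nonneg x),
    ← Real.rpow_mul hM.le, neg_mul, inv_mul_cancel₀ hα.ne', Real.rpow_neg_one]
  rw [neg_div, div_eq_inv_mul]
lemma qa_nonneg (α x : ℝ) : 0 ≤ qa α x := (Real.exp_pos _).le

lemma qa_measurable (α : ℝ) : Measurable (qa α) := by
  unfold qa
  fun_prop

lemma qak_measurable (α : ℝ) : ∀ n, Measurable (qak α n)
  | 0 => qa_measurable α
  | (n + 1) => by
    have hF : Measurable (fun p : ℝ × ℝ => qak α n (p.1 - p.2) * qa α p.2) :=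
      ((qak_measurable α n).comp (measurable_fst.sub measurable_snd)).mul
        ((qa_measurable α).comp measurable_snd)
    exact (StronglyMeasurable.integral_prod_right' (hF.stronglyMeasurable)).measurable

lemma qak_nonneg (α : ℝ) : ∀ n x, 0 ≤ qak α n x
  | 0, x => qa_nonneg α x
  | (n + 1), x => integral_nonneg fun t => mul_nonneg (qak_nonneg α n _) (qa_nonneg α t)

/-- key pointwise inequality for the upper bound -/
lemma key_upper {α M : ℝ} (hα : 0 < α) (hM : 1 ≤ M) (x t : ℝ) :
    Real.exp (-(|x - t| ^ α) / M) * Real.exp (-|t| ^ α) ≤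
      Real.exp (-(|x| ^ α) / (2 ^ α * M)) *
        (Real.exp (-(|x - t| ^ α) / M) + Real.exp (-|t| ^ α)) := by
  have hM0 : (0:ℝ) < M := lt_of_lt_of_le one_pos hM
  have h2 : (0:ℝ) < 2 ^ α := Real.rpow_pos_of_pos two_pos α
  have hhalf : (|x| / 2) ^ α = |x| ^ α / 2 ^ α := by
    rw [Real.div_rpow (abs_nonneg x) (by norm_num : (0:ℝ) ≤ 2)]
  rcases le_total (|x| / 2) |t| with h | h
  · have h1 : |x| ^ α / (2 ^ α * M) ≤ |t| ^ α := by
      calc |x| ^ α / (2 ^ α * M) ≤ |x| ^ α / (2 ^ α * 1) := by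
            gcongr
          _ = (|x| / 2) ^ α := by rw [mul_one, hhalf]
          _ ≤ |t| ^ α := Real.rpow_le_rpow (by positivity) h hα.le
    have : Real.exp (-|t| ^ α) ≤ Real.exp (-(|x| ^ α) / (2 ^ α * M)) := by
      rw [Real.exp_le_exp, neg_div]
      exact neg_le_neg h1
    calc Real.exp (-(|x - t| ^ α) / M) * Real.exp (-|t| ^ α)
        ≤ Real.exp (-(|x| ^ α) / (2 ^ α * M)) * Real.exp (-(|x - t| ^ α) / M) := by
          rw [mul_comm]
          exact mul_le_mul_of_nonneg_right this (Real.exp_pos _).le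
      _ ≤ _ := by
          have := (Real.exp_pos (-|t| ^ α)).le
          nlinarith [Real.exp_pos (-(|x| ^ α) / (2 ^ α * M))]
  · have hxt : |x| / 2 ≤ |x - t| := by
      have := abs_sub_abs_le_abs_sub x t
      have h2' := abs_nonneg (x - t)
      linarith
    have h1 : |x| ^ α / (2 ^ α * M) ≤ |x - t| ^ α / M := by
      rw [div_mul_eq_div_div, ← hhalf]
      gcongr

    have : Real.exp (-(|x - t| ^ α) / M) ≤ Real.exp (-(|x| ^ α) / (2 ^ α * M)) := by
      rw [Real.exp_le_exp, neg_div, neg_div]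
      exact neg_le_neg h1
    calc Real.exp (-(|x - t| ^ α) / M) * Real.exp (-|t| ^ α)
        ≤ Real.exp (-(|x| ^ α) / (2 ^ α * M)) * Real.exp (-|t| ^ α) :=
          mul_le_mul_of_nonneg_right this (Real.exp_pos _).le
      _ ≤ _ := by
          have := (Real.exp_pos (-(|x - t| ^ α) / M)).le
          nlinarith [Real.exp_pos (-(|x| ^ α) / (2 ^ α * M))]

/-- key interval for the lower bound -/
lemma key_lower {α : ℝ} (hα : 0 < α) (x : ℝ) :
    ∃ c : ℝ, ∀ t ∈ Set.Icc c (c + 1), |x - t| ^ α ≤ 1 ∧ |t| ^ α ≤ |x| ^ α + 1 := by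
  refine ⟨if 0 ≤ x then max (x - 1) 0 else min x (-1), fun t ht => ?_⟩
  obtain ⟨ht1, ht2⟩ := ht
  have habs : |x - t| ≤ 1 ∧ |t| ≤ max |x| 1 := by
    by_cases hx : 0 ≤ x
    · simp only [if_pos hx] at ht1 ht2
      constructor
      · rw [abs_le]
        constructor
        · rcases le_total x 1 with h | h
          · have : max (x - 1) 0 = 0 := max_eq_right (by linarith)
            rw [this] at ht2; linarith
          · have : max (x - 1) 0 = x - 1 := max_eq_left (by linarith)
            rw [this] at ht2; linarith
        · have : max (x - 1) 0 ≥ x - 1 := le_max_left _ _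
          linarith
      · rw [abs_of_nonneg (le_trans (le_max_right _ _) ht1), abs_of_nonneg hx]
        rcases le_total x 1 with h | h
        · have : max (x - 1) 0 = 0 := max_eq_right (by linarith)
          rw [this] at ht2
          exact le_trans (by linarith) (le_max_right x 1)
        · have : max (x - 1) 0 = x - 1 := max_eq_left (by linarith)
          rw [this] at ht2
          exact le_trans (by linarith) (le_max_left x 1)
    · push_neg at hx
      simp only [if_neg (not_le.mpr hx)] at ht1 ht2
      have hx' : |x| = -x := abs_of_neg hx
      constructor
      · rw [abs_le]
        refine ⟨by have := min_le_left x (-1); linarith, ?_⟩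
        rcases le_total x (-1) with h | h
        · rw [min_eq_left h] at ht1; linarith
        · rw [min_eq_right h] at ht1; linarith
      · have ht0 : t ≤ 0 := by
          have : min x (-1) + 1 ≤ 0 := by
            rcases le_total x (-1) with h | h
            · rw [min_eq_left h]; linarith
            · rw [min_eq_right h]; norm_num
          linarith
        rw [abs_of_nonpos ht0, hx']
        have : min x (-1) ≤ t := ht1
        rcases le_total x (-1) with h | h
        · rw [min_eq_left h] at this
          exact le_trans (by linarith) (le_max_left (-x) 1)
        · rw [min_eq_right h] at this
          exact le_trans (by linarith) (le_max_right (-x) 1)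
  obtain ⟨h1, h2⟩ := habs
  constructor
  · exact Real.rpow_le_one (abs_nonneg _) h1 hα.le
  · have : |t| ^ α ≤ (max |x| 1) ^ α := Real.rpow_le_rpow (abs_nonneg t) h2 hα.le
    refine le_trans this ?_
    rcases le_total |x| 1 with h | h
    · rw [max_eq_right h, Real.one_rpow]
      have : (0:ℝ) ≤ |x| ^ α := by positivity
      linarith
    · rw [max_eq_left h]
      linarith

lemma qak_bounds {α : ℝ} (hα : 0 < α) (n : ℕ) :
    ∃ a > (0:ℝ), ∃ b > (0:ℝ), ∀ x : ℝ,
      a * Real.exp (-|x| ^ α) ≤ qak α n x ∧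
      qak α n x ≤ b * Real.exp (-(|x| ^ α) / 2 ^ ((n : ℝ) * α)) := by
  induction n with
  | zero =>
    refine ⟨1, one_pos, 1, one_pos, fun x => ?_⟩
    have h0 : ((0 : ℕ) : ℝ) * α = 0 := by norm_num
    rw [h0, Real.rpow_zero, div_one]
    constructor
    · rw [one_mul]; exact le_refl _
    · rw [one_mul]; exact le_refl _
  | succ n ih =>
    obtain ⟨a, ha, b, hb, hab⟩ := ih
    set M : ℝ := 2 ^ ((n : ℝ) * α) with hMdef
    have hM0 : 0 < M := Real.rpow_pos_of_pos two_pos _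
    have hM1 : 1 ≤ M := Real.one_le_rpow one_le_two (by positivity)
    have hexp : (2:ℝ) ^ (((n + 1 : ℕ) : ℝ) * α) = 2 ^ α * M := by
      rw [hMdef, ← Real.rpow_add two_pos]
      congr 1
      push_cast
      ring
    have hqak : qak α (n + 1) = fun x => ∫ t : ℝ, qak α n (x - t) * qa α t := rfl
    -- integrability facts
    have hint1 : Integrable (fun t : ℝ => Real.exp (-(|t| ^ α) / M)) :=
      integrable_exp_neg_abs_rpow_div hα hM0
    have hint2 : Integrable (fun t : ℝ => Real.exp (-|t| ^ α)) :=
      integrable_exp_neg_abs_rpow hα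
    set C1 : ℝ := ∫ t : ℝ, Real.exp (-(|t| ^ α) / M) with hC1
    set C2 : ℝ := ∫ t : ℝ, Real.exp (-|t| ^ α) with hC2
    have hC1nn : 0 ≤ C1 := integral_nonneg fun t => (Real.exp_pos _).le
    have hC2nn : 0 ≤ C2 := integral_nonneg fun t => (Real.exp_pos _).le
    refine ⟨a * Real.exp (-2), by positivity, b * (C1 + C2) + 1, by positivity, fun x => ?_⟩
    set K : ℝ := Real.exp (-(|x| ^ α) / (2 ^ α * M)) with hK
    have hKpos : 0 < K := Real.exp_pos _
    have hint1x : Integrable (fun t : ℝ => Real.exp (-(|x - t| ^ α) / M)) :=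
      hint1.comp_sub_left x
    set g : ℝ → ℝ :=
      fun t => b * (K * (Real.exp (-(|x - t| ^ α) / M) + Real.exp (-|t| ^ α))) with hgdef
    have hg_int : Integrable g := (((hint1x.add hint2).const_mul K).const_mul b)
    have hptle : ∀ t : ℝ, qak α n (x - t) * qa α t ≤ g t := by
      intro t
      calc qak α n (x - t) * qa α t
          ≤ (b * Real.exp (-(|x - t| ^ α) / M)) * qa α t :=
            mul_le_mul_of_nonneg_right (hab (x - t)).2 (qa_nonneg α t)
        _ = b * (Real.exp (-(|x - t| ^ α) / M) * Real.exp (-|t| ^ α)) := by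
            rw [qa]; ring
        _ ≤ g t := by
            rw [hgdef]
            exact mul_le_mul_of_nonneg_left (key_upper hα hM1 x t) hb.le
    have hpt_nonneg : ∀ t : ℝ, 0 ≤ qak α n (x - t) * qa α t :=
      fun t => mul_nonneg (qak_nonneg α n _) (qa_nonneg α t)
    have hmeas : Measurable (fun t : ℝ => qak α n (x - t) * qa α t) :=
      ((qak_measurable α n).comp (measurable_const.sub measurable_id)).mul (qa_measurable α)
    have hint_integrand : Integrable (fun t : ℝ => qak α n (x - t) * qa α t) := by
      refine hg_int.mono' hmeas.aestronglyMeasurable ?_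
      filter_upwards with t
      rw [Real.norm_eq_abs, abs_of_nonneg (hpt_nonneg t)]
      exact hptle t
    constructor
    · -- lower bound
      obtain ⟨c, hc⟩ := key_lower hα x
      have hvol : (volume (Set.Icc c (c + 1))).toReal = 1 := by
        rw [Real.volume_Icc]
        norm_num
      have step1 : a * Real.exp (-2) * Real.exp (-|x| ^ α) =
          ∫ t in Set.Icc c (c + 1), a * Real.exp (-2) * Real.exp (-|x| ^ α) := by
        rw [setIntegral_const, measureReal_def, hvol, one_smul]
      rw [hqak, step1]
      have hlow : ∀ t ∈ Set.Icc c (c + 1),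
          a * Real.exp (-2) * Real.exp (-|x| ^ α) ≤ qak α n (x - t) * qa α t := by
        intro t ht
        obtain ⟨h1, h2⟩ := hc t ht
        have e1 : Real.exp (-1 : ℝ) ≤ Real.exp (-(|x - t| ^ α)) := by
          rw [Real.exp_le_exp]; linarith
        have e2 : Real.exp (-(|x| ^ α) - 1) ≤ Real.exp (-(|t| ^ α)) := by
          rw [Real.exp_le_exp]; linarith
        have key : a * Real.exp (-2) * Real.exp (-|x| ^ α) =
            (a * Real.exp (-(1:ℝ))) * Real.exp (-(|x| ^ α) - 1) := by
          rw [mul_assoc, mul_assoc, ← Real.exp_add, ← Real.exp_add]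
          congr 1
          ring
        rw [key]
        have step2 : a * Real.exp (-(1:ℝ)) ≤ qak α n (x - t) := by
          calc a * Real.exp (-(1:ℝ)) ≤ a * Real.exp (-(|x - t| ^ α)) :=
                mul_le_mul_of_nonneg_left e1 ha.le
            _ ≤ qak α n (x - t) := (hab (x - t)).1
        have step3 : Real.exp (-(|x| ^ α) - 1) ≤ qa α t := e2
        exact mul_le_mul step2 step3 (Real.exp_pos _).le (qak_nonneg α n _)
      calc (∫ t in Set.Icc c (c + 1), a * Real.exp (-2) * Real.exp (-|x| ^ α))
          ≤ ∫ t in Set.Icc c (c + 1), qak α n (x - t) * qa α t := by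
            refine setIntegral_mono_on ?_ hint_integrand.integrableOn measurableSet_Icc hlow
            exact integrableOn_const (by rw [Real.volume_Icc]; exact ENNReal.ofReal_ne_top)
        _ ≤ ∫ t : ℝ, qak α n (x - t) * qa α t :=
            setIntegral_le_integral hint_integrand
              (Filter.Eventually.of_forall hpt_nonneg)
    · -- upper bound
      rw [hqak, hexp, ← hK]
      have int_le : (∫ t : ℝ, qak α n (x - t) * qa α t) ≤ ∫ t : ℝ, g t :=
        integral_mono_of_nonneg (Filter.Eventually.of_forall hpt_nonneg) hg_int
          (Filter.Eventually.of_forall hptle)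
      have hgval : (∫ t : ℝ, g t) = b * (K * (C1 + C2)) := by
        rw [hgdef]
        rw [integral_const_mul, integral_const_mul, integral_add hint1x hint2,
          integral_sub_left_eq_self (fun u : ℝ => Real.exp (-(|u| ^ α) / M)) volume x]
      refine le_trans int_le ?_
      rw [hgval]
      nlinarith [hKpos.le, hC1nn, hC2nn, hb.le, mul_nonneg hC1nn hKpos.le]

/-- Lemma 3.3(2): two-sided exponential bounds for the `k`-fold convolution `q_{α,k}`:
`a_{α,k} exp(-|x|^α) ≤ q_{α,k}(x) ≤ b_{α,k} exp(-|x|^α / 2^{(k-1)α})`.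
(Here `qak α (k-1) = q_{α,k}`.) -/
theorem qak_two_sided_bounds (α : ℝ) (hα : α ∈ Set.Ioo (0 : ℝ) 2) (k : ℕ) (hk : 1 ≤ k) :
    ∃ a > (0 : ℝ), ∃ b > (0 : ℝ), ∀ x : ℝ,
      a * Real.exp (-|x| ^ α) ≤ qak α (k - 1) x ∧
      qak α (k - 1) x ≤ b * Real.exp (-(|x| ^ α) / 2 ^ (((k : ℝ) - 1) * α)) := by
  have hcast : ((k : ℝ) - 1) = ((k - 1 : ℕ) : ℝ) := by
    rw [Nat.cast_sub hk]; norm_num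
  rw [hcast]
  exact qak_bounds hα.1 (k - 1)

end
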